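/- Let D be an infinite division ring and let κ = card(D). Then there exists a κ × κ array (x_{αβ})_{α,β<κ} of elements of D such that for every natural number n and every pair of strictly increasing n-tuples (α_0, …, α_{n-1}) and (β_0, …, β_{n-1}) of ordinals below κ, the n × n matrix (x_{α_i β_j})_{0≤i,j<n} is nonsingular; equivalently, the n column vectors (x_{α_i β_j})_{i=0,…,n-1} ∈ D^n (j = 0, …, n-1) are left linearly independent over D. -/

import Mathlib

universe u
set_option maxHeartbeats 1000000
set_option synthInstance.maxHeartbeats 200000
open Cardinal Set Submodule

namespace SLI

theorem subsingleton_bad {D : Type u} [DivisionRing D] {n : ℕ} (i0 j0 : Fin (n+1))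
    (f : Fin (n+1) → Fin (n+1) → D)
    (hminor : LinearIndependent D fun (j : Fin n) => fun (i : Fin n) =>
      f (j0.succAbove j) (i0.succAbove i)) :
    {d : D | ¬ LinearIndependent D
      (fun j => fun i => if j = j0 ∧ i = i0 then d else f j i)}.Subsingleton := by
  set u : Fin n → Fin n → D := fun j i => f (j0.succAbove j) (i0.succAbove i) with hu
  have hspan : Submodule.span D (Set.range u) = ⊤ := by
    rcases Nat.eq_zero_or_pos n with h0 | hpos
    · subst h0
      have : Subsingleton (Fin 0 → D) := ⟨fun a b => funext fun i => i.elim0⟩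
      exact Subsingleton.elim _ _
    · haveI : Nonempty (Fin n) := ⟨⟨0, hpos⟩⟩
      exact hminor.span_eq_top_of_card_eq_finrank (by simp [Module.finrank_pi])
  have hw : (fun i => f j0 (i0.succAbove i)) ∈ Submodule.span D (Set.range u) := by
    rw [hspan]; exact Submodule.mem_top
  rw [mem_span_range_iff_exists_fun] at hw
  obtain ⟨c, hc⟩ := hw
  have main : ∀ d : D,
      ¬ LinearIndependent D (fun j => fun i => if j = j0 ∧ i = i0 then d else f j i) →
      d = ∑ j, c j * f (j0.succAbove j) i0 := by
    intro d hnd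
    rw [Fintype.not_linearIndependent_iff] at hnd
    obtain ⟨g, hsum, k, hk⟩ := hnd
    -- evaluate at rows ≠ i0
    have hrow : ∀ i' : Fin n,
        g j0 * f j0 (i0.succAbove i') + ∑ j, g (j0.succAbove j) * u j i' = 0 := by
      intro i'
      have h1 := congrFun hsum (i0.succAbove i')
      rw [Finset.sum_apply] at h1
      rw [Fin.sum_univ_succAbove
        (fun j => (g j • fun i => if j = j0 ∧ i = i0 then d else f j i) (i0.succAbove i')) j0] at h1
      simpa [Fin.succAbove_ne, hu] using h1
    by_cases hg0 : g j0 = 0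
    · exfalso
      have hz : ∀ j : Fin n, g (j0.succAbove j) = 0 := by
        have := Fintype.linearIndependent_iff.mp hminor (fun j => g (j0.succAbove j)) ?_
        · exact this
        · funext i'
          rw [Finset.sum_apply]
          have h2 := hrow i'
          rw [hg0, zero_mul, zero_add] at h2
          simpa using h2
      by_cases hkj : k = j0
      · exact hk (hkj ▸ hg0)
      · obtain ⟨k', rfl⟩ := Fin.exists_succAbove_eq hkj
        exact hk (hz k')
    · -- coefficients relation
      have hcrel : ∀ j : Fin n, g j0 * c j + g (j0.succAbove j) = 0 := by
        apply Fintype.linearIndependent_iff.mp hminor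
        funext i'
        rw [Finset.sum_apply]
        have hrw := hrow i'
        have hc' := congrFun hc i'
        rw [Finset.sum_apply] at hc'
        simp only [Pi.smul_apply, smul_eq_mul, Pi.zero_apply] at hc' ⊢
        calc ∑ j, (g j0 * c j + g (j0.succAbove j)) * u j i'
            = g j0 * (∑ j, c j * u j i') + ∑ j, g (j0.succAbove j) * u j i' := by
              simp [add_mul, Finset.sum_add_distrib, Finset.mul_sum, mul_assoc]
          _ = g j0 * f j0 (i0.succAbove i') + ∑ j, g (j0.succAbove j) * u j i' := by rw [hc']
          _ = 0 := hrow i'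
      have hrow0 : g j0 * d + ∑ j, g (j0.succAbove j) * f (j0.succAbove j) i0 = 0 := by
        have h1 := congrFun hsum i0
        rw [Finset.sum_apply] at h1
        rw [Fin.sum_univ_succAbove
          (fun j => (g j • fun i => if j = j0 ∧ i = i0 then d else f j i) i0) j0] at h1
        simpa [Fin.succAbove_ne] using h1
      have hsub : ∀ j : Fin n, g (j0.succAbove j) = -(g j0 * c j) := fun j =>
        eq_neg_of_add_eq_zero_right (hcrel j)
      rw [show (∑ j, g (j0.succAbove j) * f (j0.succAbove j) i0)
            = -(g j0 * ∑ j, c j * f (j0.succAbove j) i0) by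
          simp only [hsub, Finset.mul_sum, neg_mul, mul_assoc, ← Finset.sum_neg_distrib]] at hrow0
      have : g j0 * (d - ∑ j, c j * f (j0.succAbove j) i0) = 0 := by
        rw [mul_sub, Finset.mul_sum, sub_eq_add_neg]
        simpa [Finset.mul_sum, mul_assoc] using hrow0
      rcases mul_eq_zero.mp this with h | h
      · exact absurd h hg0
      · exact sub_eq_zero.mp h
  intro d1 h1 d2 h2
  rw [main d1 h1, main d2 h2]

abbrev Idx (D : Type u) : Type u := (Cardinal.mk D).ord.ToType

variable (D : Type u) [DivisionRing D] [Infinite D]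



noncomputable def pe : (Idx D) ≃ (Idx D) × (Idx D) :=
  Classical.choice (by
    rw [← Cardinal.eq]
    simp [Cardinal.mk_prod, Cardinal.mk_ord_toType,
      Cardinal.mul_eq_self (Cardinal.aleph0_le_mk D)])

noncomputable def tm (p : (Idx D) × Idx D) : (Idx D) := (pe D).symm p

lemma tm_inj : Function.Injective (tm D) := (pe D).symm.injective

lemma pe_tm (p : (Idx D) × Idx D) : pe D (tm D p) = p := (pe D).apply_symm_apply p

/-- matrix with a hole at `(i0, j0)` filled by `d`; other entries given by `g` at the
"time" of the position. -/
noncomputable def mat (g : (Idx D) → D) {n : ℕ} (i0 j0 : Fin (n+1)) (a b : Fin (n+1) → Idx D) (d : D) :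
    Fin (n+1) → Fin (n+1) → D :=
  fun j i => if j = j0 ∧ i = i0 then d else g (tm D (a i, b j))

/-- configurations at stage `σ`. -/
structure Cfg (σ : Idx D) : Type u where
  n : ℕ
  i0 : Fin (n+1)
  j0 : Fin (n+1)
  a : Fin (n+1) → (Idx D)
  b : Fin (n+1) → (Idx D)
  ha : StrictMono a
  hb : StrictMono b
  hhole : tm D (a i0, b j0) = σ
  hsmall : ∀ i j, ¬(j = j0 ∧ i = i0) → tm D (a i, b j) < σ

def Sset (g : (Idx D) → D) {σ : (Idx D)} (c : Cfg D σ) : Set D :=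
  {d | {e | ¬ LinearIndependent D (mat D g c.i0 c.j0 c.a c.b e)}.Subsingleton ∧
       ¬ LinearIndependent D (mat D g c.i0 c.j0 c.a c.b d)}

def bad (σ : Idx D) (g : (Idx D) → D) : Set D := ⋃ c : Cfg D σ, Sset D g c

def Aset (σ : Idx D) : Set (Idx D) := insert (pe D σ).1 (Prod.fst '' (pe D '' Iio σ))

def Bset (σ : Idx D) : Set (Idx D) := insert (pe D σ).2 (Prod.snd '' (pe D '' Iio σ))

lemma hole_eq {σ : (Idx D)} (c : Cfg D σ) : (c.a c.i0, c.b c.j0) = pe D σ :=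
  (Equiv.symm_apply_eq (pe D)).mp c.hhole

lemma a_mem {σ : (Idx D)} (c : Cfg D σ) (i : Fin (c.n+1)) : c.a i ∈ Aset D σ := by
  by_cases hi : i = c.i0
  · subst hi
    exact Set.mem_insert_iff.mpr (Or.inl (by rw [← hole_eq D c]))
  · have h1 : tm D (c.a i, c.b c.j0) < σ := c.hsmall i c.j0 (fun h => hi h.2)
    refine Set.mem_insert_iff.mpr (Or.inr ⟨(c.a i, c.b c.j0), ⟨tm D (c.a i, c.b c.j0), h1, ?_⟩, rfl⟩)
    exact pe_tm D _

lemma b_mem {σ : (Idx D)} (c : Cfg D σ) (j : Fin (c.n+1)) : c.b j ∈ Bset D σ := by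
  by_cases hj : j = c.j0
  · subst hj
    exact Set.mem_insert_iff.mpr (Or.inl (by rw [← hole_eq D c]))
  · have h1 : tm D (c.a c.i0, c.b j) < σ := c.hsmall c.i0 j (fun h => hj h.1)
    refine Set.mem_insert_iff.mpr (Or.inr ⟨(c.a c.i0, c.b j), ⟨tm D (c.a c.i0, c.b j), h1, ?_⟩, rfl⟩)
    exact pe_tm D _

noncomputable def enc {σ : (Idx D)} (c : Cfg D σ) :
    Finset ↥(Aset D σ) × Finset ↥(Bset D σ) × ↥(Aset D σ) × ↥(Bset D σ) :=
  haveI := Classical.decEq ↥(Aset D σ)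
  haveI := Classical.decEq ↥(Bset D σ)
  (Finset.univ.image (fun i => (⟨c.a i, a_mem D c i⟩ : ↥(Aset D σ))),
   Finset.univ.image (fun j => (⟨c.b j, b_mem D c j⟩ : ↥(Bset D σ))),
   ⟨c.a c.i0, a_mem D c c.i0⟩, ⟨c.b c.j0, b_mem D c c.j0⟩)

lemma enc_injective (σ : (Idx D)) : Function.Injective (enc D (σ := σ)) := by
  intro c c' h
  obtain ⟨n, i0, j0, a, b, ha, hb, hh, hs⟩ := c
  obtain ⟨n', i0', j0', a', b', ha', hb', hh', hs'⟩ := c'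
  simp only [enc, Prod.mk.injEq] at h
  obtain ⟨hA, hB, hia, hjb⟩ := h
  set fa : Fin (n+1) → ↥(Aset D σ) := fun i => ⟨a i, by exact a_mem D ⟨n,i0,j0,a,b,ha,hb,hh,hs⟩ i⟩ with hfa_def
  set fa' : Fin (n'+1) → ↥(Aset D σ) := fun i => ⟨a' i, by exact a_mem D ⟨n',i0',j0',a',b',ha',hb',hh',hs'⟩ i⟩ with hfa'_def
  set fb : Fin (n+1) → ↥(Bset D σ) := fun j => ⟨b j, by exact b_mem D ⟨n,i0,j0,a,b,ha,hb,hh,hs⟩ j⟩ with hfb_def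
  set fb' : Fin (n'+1) → ↥(Bset D σ) := fun j => ⟨b' j, by exact b_mem D ⟨n',i0',j0',a',b',ha',hb',hh',hs'⟩ j⟩ with hfb'_def
  have hfa : StrictMono fa := fun x y hxy => Subtype.mk_lt_mk.mpr (ha hxy)
  have hfa' : StrictMono fa' := fun x y hxy => Subtype.mk_lt_mk.mpr (ha' hxy)
  have hfb : StrictMono fb := fun x y hxy => Subtype.mk_lt_mk.mpr (hb hxy)
  have hfb' : StrictMono fb' := fun x y hxy => Subtype.mk_lt_mk.mpr (hb' hxy)
  have hra : Set.range fa = Set.range fa' := by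
    have := congrArg (fun s : Finset ↥(Aset D σ) => (s : Set ↥(Aset D σ))) hA
    simpa using this
  have hrb : Set.range fb = Set.range fb' := by
    have := congrArg (fun s : Finset ↥(Bset D σ) => (s : Set ↥(Bset D σ))) hB
    simpa using this
  have hcard : ∀ (m : ℕ) (f : Fin (m+1) → ↥(Aset D σ)), Function.Injective f →
      (Set.range f).ncard = m + 1 := by
    intro m f hf
    rw [← Set.image_univ, Set.ncard_image_of_injective _ hf, Set.ncard_univ,
      Nat.card_eq_fintype_card, Fintype.card_fin]
  have hn : n = n' := by
    have h1 := hcard n fa hfa.injective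
    rw [hra, hcard n' fa' hfa'.injective] at h1
    omega
  subst hn
  haveI : WellFoundedLT (Fin (n+1)) := inferInstance
  have hfaeq : fa = fa' :=
    (StrictMono.range_inj (β := Fin (n+1)) (γ := ↥(Aset D σ)) hfa hfa').mp hra
  have hfbeq : fb = fb' :=
    (StrictMono.range_inj (β := Fin (n+1)) (γ := ↥(Bset D σ)) hfb hfb').mp hrb
  have haeq : a = a' := by
    funext i
    exact congrArg Subtype.val (congrFun hfaeq i)
  have hbeq : b = b' := by
    funext j
    exact congrArg Subtype.val (congrFun hfbeq j)
  subst haeq hbeq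
  have hi0 : i0 = i0' := ha.injective (congrArg Subtype.val hia)
  have hj0 : j0 = j0' := hb.injective (congrArg Subtype.val hjb)
  subst hi0 hj0
  rfl

lemma mk_bad_le (σ : Idx D) (g : (Idx D) → D) : #(bad D σ g) ≤ #(Cfg D σ) := by
  have hmem : ∀ d : ↥(bad D σ g), ∃ c : Cfg D σ, (d : D) ∈ Sset D g c := fun d =>
    Set.mem_iUnion.mp d.2
  choose φ hφ using hmem
  apply Cardinal.mk_le_of_injective (f := φ)
  intro d1 d2 h
  have h1 := hφ d1
  have h2 := hφ d2
  rw [← h] at h2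
  exact Subtype.ext (h1.1 h1.2 h2.2)

lemma mk_bad_lt (σ : Idx D) (g : (Idx D) → D) : #(bad D σ g) < #D := by
  rcases Set.finite_or_infinite (Iio σ : Set (Idx D)) with hfin | hinf
  · -- finite stage
    have hA : (Aset D σ).Finite := ((hfin.image (pe D)).image Prod.fst).insert _
    have hB : (Bset D σ).Finite := ((hfin.image (pe D)).image Prod.snd).insert _
    haveI := hA.to_subtype
    haveI := hB.to_subtype
    haveI := Fintype.ofFinite ↥(Aset D σ)
    haveI := Fintype.ofFinite ↥(Bset D σ)
    haveI : Finite (Cfg D σ) := Finite.of_injective _ (enc_injective D σ)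
    calc #(bad D σ g) ≤ #(Cfg D σ) := mk_bad_le D σ g
      _ < ℵ₀ := Cardinal.lt_aleph0_of_finite _
      _ ≤ #D := Cardinal.aleph0_le_mk D
  · haveI := hinf.to_subtype
    set ν := #(Iio σ : Set (Idx D)) with hν_def
    have hν : ℵ₀ ≤ ν := Cardinal.aleph0_le_mk _
    have hνD : ν < #D := Cardinal.mk_Iio_ord_toType σ
    have hA : #↥(Aset D σ) ≤ ν := by
      calc #↥(Aset D σ) ≤ #↥(Prod.fst '' (pe D '' Iio σ)) + 1 := Cardinal.mk_insert_le
        _ ≤ #↥(pe D '' Iio σ) + 1 := by gcongr; exact Cardinal.mk_image_le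
        _ ≤ ν + 1 := by gcongr; exact Cardinal.mk_image_le
        _ = ν := Cardinal.add_one_eq hν
    have hB : #↥(Bset D σ) ≤ ν := by
      calc #↥(Bset D σ) ≤ #↥(Prod.snd '' (pe D '' Iio σ)) + 1 := Cardinal.mk_insert_le
        _ ≤ #↥(pe D '' Iio σ) + 1 := by gcongr; exact Cardinal.mk_image_le
        _ ≤ ν + 1 := by gcongr; exact Cardinal.mk_image_le
        _ = ν := Cardinal.add_one_eq hν
    have hFA : #(Finset ↥(Aset D σ)) ≤ ν := by
      rcases finite_or_infinite ↥(Aset D σ) with h | h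
      · exact le_trans Cardinal.mk_le_aleph0 hν
      · rw [Cardinal.mk_finset_of_infinite]; exact hA
    have hFB : #(Finset ↥(Bset D σ)) ≤ ν := by
      rcases finite_or_infinite ↥(Bset D σ) with h | h
      · exact le_trans Cardinal.mk_le_aleph0 hν
      · rw [Cardinal.mk_finset_of_infinite]; exact hB
    calc #(bad D σ g) ≤ #(Cfg D σ) := mk_bad_le D σ g
      _ ≤ #(Finset ↥(Aset D σ) × Finset ↥(Bset D σ) × ↥(Aset D σ) × ↥(Bset D σ)) :=
          Cardinal.mk_le_of_injective (enc_injective D σ)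
      _ = #(Finset ↥(Aset D σ)) * (#(Finset ↥(Bset D σ)) * (#↥(Aset D σ) * #↥(Bset D σ))) := by
          simp [Cardinal.mk_prod, Cardinal.lift_id]
      _ ≤ ν * (ν * (ν * ν)) := by gcongr
      _ = ν := by rw [Cardinal.mul_eq_self hν, Cardinal.mul_eq_self hν, Cardinal.mul_eq_self hν]
      _ < #D := hνD

lemma exists_good (σ : Idx D) (g : (Idx D) → D) : ∃ d : D, d ∉ bad D σ g := by
  by_contra hcon
  push_neg at hcon
  have hsub : (Set.univ : Set D) ⊆ bad D σ g := fun d _ => hcon d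
  have := (Cardinal.mk_le_mk_of_subset hsub)
  rw [Cardinal.mk_univ] at this
  exact absurd (lt_of_le_of_lt this (mk_bad_lt D σ g)) (lt_irrefl _)

noncomputable def xp : (Idx D) → D :=
  IsWellFounded.fix (α := Idx D) (· < ·) fun σ ih =>
    Classical.choose (exists_good D σ (fun τ => if h : τ < σ then ih τ h else 1))

noncomputable def gB (σ : Idx D) : (Idx D) → D := fun τ => if τ < σ then xp D τ else 1

lemma xp_spec (σ : Idx D) : xp D σ ∉ bad D σ (gB D σ) := by
  have h := IsWellFounded.fix_eq (α := Idx D) (· < ·)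
    (fun σ ih => Classical.choose (exists_good D σ (fun τ => if h : τ < σ then ih τ h else 1))) σ
  rw [show xp D σ = Classical.choose (exists_good D σ (gB D σ)) by
    rw [xp]; rw [h]; rfl]
  exact Classical.choose_spec (exists_good D σ (gB D σ))

theorem inv (σ : Idx D) : ∀ (n : ℕ) (a b : Fin n → (Idx D)), StrictMono a → StrictMono b →
    (∀ i j, tm D (a i, b j) ≤ σ) →
    LinearIndependent D (fun (j i : Fin n) => xp D (tm D (a i, b j))) := by
  refine IsWellFounded.induction ((· < ·) : (Idx D) → (Idx D) → Prop)
    (motive := fun σ => ∀ (n : ℕ) (a b : Fin n → (Idx D)), StrictMono a → StrictMono b →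
      (∀ i j, tm D (a i, b j) ≤ σ) →
      LinearIndependent D (fun (j i : Fin n) => xp D (tm D (a i, b j)))) σ ?_
  clear σ
  intro σ IH n a b ha hb hle
  obtain _ | m := n
  · exact linearIndependent_empty_type
  by_cases hex : ∃ p : Fin (m+1) × Fin (m+1), tm D (a p.1, b p.2) = σ
  · obtain ⟨⟨i0, j0⟩, hp⟩ := hex
    have hne : ∀ i j, ¬(j = j0 ∧ i = i0) → tm D (a i, b j) < σ := by
      intro i j hnij
      refine lt_of_le_of_ne (hle i j) (fun heq => hnij ?_)
      have hpair := tm_inj D (heq.trans hp.symm)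
      have h1 : a i = a i0 := congrArg Prod.fst hpair
      have h2 : b j = b j0 := congrArg Prod.snd hpair
      exact ⟨hb.injective h2, ha.injective h1⟩
    have hminor : LinearIndependent D (fun (j i : Fin m) =>
        xp D (tm D (a (i0.succAbove i), b (j0.succAbove j)))) := by
      rcases isEmpty_or_nonempty (Fin m) with hm | hm
      · exact linearIndependent_empty_type
      · classical
        set T : Finset (Idx D) := Finset.image (fun p : Fin m × Fin m =>
            tm D (a (i0.succAbove p.1), b (j0.succAbove p.2))) Finset.univ with hT
        have hTne : T.Nonempty :=
          ⟨_, Finset.mem_image.mpr ⟨Classical.arbitrary _, Finset.mem_univ _, rfl⟩⟩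
        have hτσ : T.max' hTne < σ := by
          obtain ⟨p, -, hpe⟩ := Finset.mem_image.mp (T.max'_mem hTne)
          rw [← hpe]
          exact hne _ _ (fun hc => Fin.succAbove_ne j0 p.2 hc.1)
        exact IH (T.max' hTne) hτσ m (a ∘ i0.succAbove) (b ∘ j0.succAbove)
          (ha.comp (Fin.strictMono_succAbove i0)) (hb.comp (Fin.strictMono_succAbove j0))
          (fun i j => Finset.le_max' T _ (Finset.mem_image.mpr ⟨(i,j), Finset.mem_univ _, rfl⟩))
    have hss := subsingleton_bad i0 j0 (fun j i => xp D (tm D (a i, b j))) hminor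
    by_contra hnot
    apply xp_spec D σ
    have hmateq : ∀ e : D, mat D (gB D σ) i0 j0 a b e =
        (fun j i => if j = j0 ∧ i = i0 then e else xp D (tm D (a i, b j))) := by
      intro e; funext j i
      by_cases hji : j = j0 ∧ i = i0
      · simp [mat, hji]
      · simp only [mat, if_neg hji, gB, if_pos (hne i j hji)]
    refine Set.mem_iUnion.mpr ⟨⟨m, i0, j0, a, b, ha, hb, hp, hne⟩, ?_, ?_⟩
    · show {e : D | ¬ LinearIndependent D (mat D (gB D σ) i0 j0 a b e)}.Subsingleton
      have hseteq : {e : D | ¬ LinearIndependent D (mat D (gB D σ) i0 j0 a b e)} =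
          {e | ¬ LinearIndependent D
            (fun j i => if j = j0 ∧ i = i0 then e else xp D (tm D (a i, b j)))} := by
        ext e; simp only [Set.mem_setOf_eq, hmateq e]
      rw [hseteq]; exact hss
    · show ¬ LinearIndependent D (mat D (gB D σ) i0 j0 a b (xp D σ))
      have hfam : mat D (gB D σ) i0 j0 a b (xp D σ) =
          fun (j i : Fin (m+1)) => xp D (tm D (a i, b j)) := by
        rw [hmateq]
        funext j i
        by_cases hji : j = j0 ∧ i = i0
        · obtain ⟨rfl, rfl⟩ := hji; rw [if_pos ⟨rfl, rfl⟩, hp]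
        · rw [if_neg hji]
      rw [hfam]; exact hnot
  · have hlt : ∀ i j, tm D (a i, b j) < σ := fun i j =>
      lt_of_le_of_ne (hle i j) (fun hh => hex ⟨(i, j), hh⟩)
    classical
    set T : Finset (Idx D) := Finset.image (fun p : Fin (m+1) × Fin (m+1) =>
        tm D (a p.1, b p.2)) Finset.univ with hT
    have hTne : T.Nonempty := ⟨_, Finset.mem_image.mpr ⟨(0, 0), Finset.mem_univ _, rfl⟩⟩
    have hτσ : T.max' hTne < σ := by
      obtain ⟨p, -, hpe⟩ := Finset.mem_image.mp (T.max'_mem hTne)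
      rw [← hpe]; exact hlt p.1 p.2
    exact IH (T.max' hTne) hτσ (m+1) a b ha hb
      (fun i j => Finset.le_max' T _ (Finset.mem_image.mpr ⟨(i,j), Finset.mem_univ _, rfl⟩))

end SLI

/-- Let `D` be an infinite division ring and `κ = card D`.
There is a `κ × κ` array `x` of elements of `D` (indexed by the ordinals below
`κ`) which is strongly linearly independent: for every `n` and all strictly
increasing `n`-tuples `α`, `β` of indices, the `n` column vectors
`(x (α i) (β j))_{i} ∈ D^n` (for `j = 0, …, n-1`) are left linearly
independent over `D`, i.e. the `n × n` matrix `(x (α i) (β j))` is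
nonsingular. -/
theorem exists_strongly_linearly_independent (D : Type u) [DivisionRing D]
    [Infinite D] :
    ∃ x : (Cardinal.mk D).ord.ToType → (Cardinal.mk D).ord.ToType → D,
      ∀ (n : ℕ) (α β : Fin n → (Cardinal.mk D).ord.ToType),
        StrictMono α → StrictMono β →
        LinearIndependent D (fun j i : Fin n => x (α i) (β j)) := by
  classical
  refine ⟨fun α β => SLI.xp D (SLI.tm D (α, β)), ?_⟩
  intro n α β hα hβ
  obtain _ | m := n
  · exact linearIndependent_empty_type
  · set T : Finset (SLI.Idx D) := Finset.image (fun p : Fin (m+1) × Fin (m+1) =>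
      SLI.tm D (α p.1, β p.2)) Finset.univ with hT
    have hTne : T.Nonempty := ⟨_, Finset.mem_image.mpr ⟨(0, 0), Finset.mem_univ _, rfl⟩⟩
    exact SLI.inv D (T.max' hTne) (m+1) α β hα hβ
      (fun i j => Finset.le_max' T _ (Finset.mem_image.mpr ⟨(i,j), Finset.mem_univ _, rfl⟩))
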